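/- If (F_1, L) and (F_2, L) are two admissible balanced pairs in an abelian category C, then the classes of direct summands of objects of F_1 and of F_2 coincide: Smd(F_1) = Smd(F_2). -/

import Mathlib

open CategoryTheory Limits

namespace Paper

universe w v u

variable {C : Type u} [Category.{v} C] [Abelian C]

section ExtDefs
variable [HasExt.{w} C]

/-- The right `Ext^1`-orthogonal class. -/
def rightPerp1 (F : Set C) : Set C :=
  {B | ∀ A ∈ F, Subsingleton (Abelian.Ext A B 1)}

/-- The left `Ext^1`-orthogonal class. -/
def leftPerp1 (L : Set C) : Set C :=
  {A | ∀ B ∈ L, Subsingleton (Abelian.Ext A B 1)}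

/-- The right `Ext^{>0}`-orthogonal class. -/
def rightPerp (F : Set C) : Set C :=
  {B | ∀ A ∈ F, ∀ n : ℕ, 0 < n → Subsingleton (Abelian.Ext A B n)}

/-- The left `Ext^{>0}`-orthogonal class. -/
def leftPerp (L : Set C) : Set C :=
  {A | ∀ B ∈ L, ∀ n : ℕ, 0 < n → Subsingleton (Abelian.Ext A B n)}

/-- `(Y, X)` is a cotorsion pair: each class is the `Ext^1`-orthogonal of the other. -/
structure IsCotorsionPair (Y X : Set C) : Prop where
  mem_left_iff : ∀ A : C, A ∈ Y ↔ ∀ B ∈ X, Subsingleton (Abelian.Ext A B 1)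
  mem_right_iff : ∀ B : C, B ∈ X ↔ ∀ A ∈ Y, Subsingleton (Abelian.Ext A B 1)

/-- Hereditary: `Ext^i(Y, X) = 0` for all `i > 0`. -/
def Hereditary (Y X : Set C) : Prop :=
  ∀ A ∈ Y, ∀ B ∈ X, ∀ n : ℕ, 0 < n → Subsingleton (Abelian.Ext A B n)

end ExtDefs

/-- There exists a short exact sequence `0 ⟶ A ⟶ B ⟶ X ⟶ 0`. -/
def SES (A B X : C) : Prop :=
  ∃ (f : A ⟶ B) (g : B ⟶ X) (w : f ≫ g = 0), (ShortComplex.mk f g w).ShortExact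

/-- Completeness of a pair of classes: every object admits the two approximation
short exact sequences. -/
def Complete (Y X : Set C) : Prop :=
  ∀ M : C, (∃ B ∈ X, ∃ A ∈ Y, SES B A M) ∧ (∃ B ∈ X, ∃ A ∈ Y, SES M B A)

/-- A class is resolving if it contains the projectives and is closed under
extensions and under kernels of epimorphisms between its objects. -/
def Resolving (Y : Set C) : Prop :=
  (∀ P : C, Projective P → P ∈ Y) ∧
  (∀ A E B : C, SES A E B → A ∈ Y → B ∈ Y → E ∈ Y) ∧
  (∀ A E B : C, SES A E B → E ∈ Y → B ∈ Y → A ∈ Y)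

/-- A class is coresolving if it contains the injectives and is closed under
extensions and under cokernels of monomorphisms between its objects. -/
def Coresolving (X : Set C) : Prop :=
  (∀ I : C, Injective I → I ∈ X) ∧
  (∀ A E B : C, SES A E B → A ∈ X → B ∈ X → E ∈ X) ∧
  (∀ A E B : C, SES A E B → A ∈ X → E ∈ X → B ∈ X)

/-- `φ : F₀ ⟶ M` is an `F`-precover of `M`. -/
def IsPrecover (F : Set C) {F₀ M : C} (φ : F₀ ⟶ M) : Prop :=
  F₀ ∈ F ∧ ∀ F' ∈ F, ∀ g : F' ⟶ M, ∃ h : F' ⟶ F₀, h ≫ φ = g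

/-- `ψ : M ⟶ L₀` is an `L`-preenvelope of `M`. -/
def IsPreenvelope (L : Set C) {M L₀ : C} (ψ : M ⟶ L₀) : Prop :=
  L₀ ∈ L ∧ ∀ L' ∈ L, ∀ g : M ⟶ L', ∃ h : L₀ ⟶ L', ψ ≫ h = g

/-- `F` is a precovering class. -/
def Precovering (F : Set C) : Prop :=
  ∀ M : C, ∃ (F₀ : C) (φ : F₀ ⟶ M), IsPrecover F φ

/-- `L` is a preenveloping class. -/
def Preenveloping (L : Set C) : Prop :=
  ∀ M : C, ∃ (L₀ : C) (ψ : M ⟶ L₀), IsPreenvelope L ψ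

/-- `F` is special precovering: every object has an epic `F`-precover with
kernel in `F^{⊥₁}`. -/
def SpecialPrecovering [HasExt.{w} C] (F : Set C) : Prop :=
  ∀ M : C, ∃ (F₀ : C) (φ : F₀ ⟶ M), IsPrecover F φ ∧ Epi φ ∧
    kernel φ ∈ rightPerp1.{w} F

/-- `L` is special preenveloping: every object has a monic `L`-preenvelope with
cokernel in `^{⊥₁}L`. -/
def SpecialPreenveloping [HasExt.{w} C] (L : Set C) : Prop :=
  ∀ M : C, ∃ (L₀ : C) (ψ : M ⟶ L₀), IsPreenvelope L ψ ∧ Mono ψ ∧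
    cokernel ψ ∈ leftPerp1.{w} L

/-- The class of direct summands of objects of `F`. -/
def Smd (F : Set C) : Set C :=
  {A | ∃ B ∈ F, ∃ (i : A ⟶ B) (r : B ⟶ A), i ≫ r = 𝟙 A}

/-- Data of a (not necessarily exact) resolution `⋯ ⟶ F₁ ⟶ F₀ ⟶ M ⟶ 0`. -/
structure Resolution (M : C) where
  obj : ℕ → C
  d : ∀ n : ℕ, obj (n + 1) ⟶ obj n
  ε : obj 0 ⟶ M
  d_comp_d : ∀ n : ℕ, d (n + 1) ≫ d n = 0
  d_comp_ε : d 0 ≫ ε = 0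

namespace Resolution

variable {M : C} (R : Resolution M)

/-- All objects of the resolution lie in `S`. -/
def ObjsIn (S : Set C) : Prop := ∀ n : ℕ, R.obj n ∈ S

/-- The resolution becomes exact after applying `Hom(X, -)`. -/
def HomLeftAcyclic (X : C) : Prop :=
  (∀ g : X ⟶ M, ∃ h : X ⟶ R.obj 0, h ≫ R.ε = g) ∧
  (∀ h : X ⟶ R.obj 0, h ≫ R.ε = 0 → ∃ k : X ⟶ R.obj 1, k ≫ R.d 0 = h) ∧
  (∀ (n : ℕ) (h : X ⟶ R.obj (n + 1)), h ≫ R.d n = 0 →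
    ∃ k : X ⟶ R.obj (n + 2), k ≫ R.d (n + 1) = h)

/-- The resolution becomes exact after applying `Hom(-, L')`. -/
def HomRightAcyclic (L' : C) : Prop :=
  (∀ g : M ⟶ L', R.ε ≫ g = 0 → g = 0) ∧
  (∀ g : R.obj 0 ⟶ L', R.d 0 ≫ g = 0 → ∃ k : M ⟶ L', R.ε ≫ k = g) ∧
  (∀ (n : ℕ) (g : R.obj (n + 1) ⟶ L'), R.d (n + 1) ≫ g = 0 →
    ∃ k : R.obj n ⟶ L', R.d n ≫ k = g)

end Resolution

/-- Data of a (not necessarily exact) coresolution `0 ⟶ M ⟶ L⁰ ⟶ L¹ ⟶ ⋯`. -/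
structure Coresolution (M : C) where
  obj : ℕ → C
  d : ∀ n : ℕ, obj n ⟶ obj (n + 1)
  η : M ⟶ obj 0
  d_comp_d : ∀ n : ℕ, d n ≫ d (n + 1) = 0
  η_comp_d : η ≫ d 0 = 0

namespace Coresolution

variable {M : C} (R : Coresolution M)

/-- All objects of the coresolution lie in `S`. -/
def ObjsIn (S : Set C) : Prop := ∀ n : ℕ, R.obj n ∈ S

/-- The coresolution becomes exact after applying `Hom(X, -)`. -/
def HomLeftAcyclic (X : C) : Prop :=
  (∀ g : X ⟶ M, g ≫ R.η = 0 → g = 0) ∧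
  (∀ g : X ⟶ R.obj 0, g ≫ R.d 0 = 0 → ∃ k : X ⟶ M, k ≫ R.η = g) ∧
  (∀ (n : ℕ) (g : X ⟶ R.obj (n + 1)), g ≫ R.d (n + 1) = 0 →
    ∃ k : X ⟶ R.obj n, k ≫ R.d n = g)

/-- The coresolution becomes exact after applying `Hom(-, L')`. -/
def HomRightAcyclic (L' : C) : Prop :=
  (∀ g : M ⟶ L', ∃ h : R.obj 0 ⟶ L', R.η ≫ h = g) ∧
  (∀ h : R.obj 0 ⟶ L', R.η ≫ h = 0 → ∃ k : R.obj 1 ⟶ L', R.d 0 ≫ k = h) ∧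
  (∀ (n : ℕ) (h : R.obj (n + 1) ⟶ L'), R.d n ≫ h = 0 →
    ∃ k : R.obj (n + 2) ⟶ L', R.d (n + 1) ≫ k = h)

end Coresolution

/-- `(F, L)` is a balanced pair: `F` is precovering, `L` is preenveloping, every object
has a `Hom(-, L)`-acyclic `F`-resolution and a `Hom(F, -)`-acyclic `L`-coresolution. -/
def BalancedPair (F L : Set C) : Prop :=
  Precovering F ∧ Preenveloping L ∧
  (∀ M : C, ∃ R : Resolution M, R.ObjsIn F ∧
    (∀ X ∈ F, R.HomLeftAcyclic X) ∧ (∀ Y ∈ L, R.HomRightAcyclic Y)) ∧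
  (∀ M : C, ∃ R : Coresolution M, R.ObjsIn L ∧
    (∀ X ∈ F, R.HomLeftAcyclic X) ∧ (∀ Y ∈ L, R.HomRightAcyclic Y))

/-- Admissible: every `F`-precover is epic and every `L`-preenvelope is monic. -/
def Admissible (F L : Set C) : Prop :=
  (∀ (F₀ M : C) (φ : F₀ ⟶ M), IsPrecover F φ → Epi φ) ∧
  (∀ (M L₀ : C) (ψ : M ⟶ L₀), IsPreenvelope L ψ → Mono ψ)

section Aux

/-- The kernel of `R.ε` for a suitable resolution has the extension property into `L`. -/
lemma ker_ext_property {F L : Set C} (hprec : Precovering F) (ha : Admissible F L)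
    {A : C} (R : Resolution A)
    (hF : ∀ X ∈ F, R.HomLeftAcyclic X) (hL : ∀ Y ∈ L, R.HomRightAcyclic Y)
    {Y : C} (hY : Y ∈ L) (f : kernel R.ε ⟶ Y) :
    ∃ v : R.obj 0 ⟶ Y, kernel.ι R.ε ≫ v = f := by
  set k := kernel.ι R.ε
  have hu0 : (kernel.lift R.ε (R.d 0) (R.d_comp_ε)) ≫ k = R.d 0 := kernel.lift_ι _ _ _
  set u0 := kernel.lift R.ε (R.d 0) (R.d_comp_ε)
  -- u0 is epi
  obtain ⟨G, π, hπ⟩ := hprec (kernel R.ε)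
  have hπepi : Epi π := ha.1 _ _ _ hπ
  obtain ⟨m, hm⟩ := ((hF G hπ.1).2.1 (π ≫ k)) (by simp [k, Category.assoc, kernel.condition])
  have hmu : m ≫ u0 = π := by
    have : (m ≫ u0) ≫ k = π ≫ k := by rw [Category.assoc, hu0, hm]
    exact (cancel_mono k).1 this
  have hu0epi : Epi u0 := by
    have : Epi (m ≫ u0) := hmu ▸ hπepi
    exact epi_of_epi m u0
  -- d1 ≫ u0 = 0
  have hd1u0 : R.d 1 ≫ u0 = 0 := by
    have : (R.d 1 ≫ u0) ≫ k = 0 ≫ k := by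
      rw [Category.assoc, hu0, R.d_comp_d 0, zero_comp]
    exact (cancel_mono k).1 this
  obtain ⟨v, hv⟩ := ((hL Y hY).2.2 0 (u0 ≫ f))
    (by rw [← Category.assoc, hd1u0, zero_comp])
  refine ⟨v, ?_⟩
  have : u0 ≫ k ≫ v = u0 ≫ f := by rw [← Category.assoc, hu0, hv]
  exact (cancel_epi u0).1 this

/-- Extension property of the kernel pulls back. -/
lemma ker_ext_pullback {L : Set C} {P M X : C} (p : P ⟶ M) [Epi p]
    (hext : ∀ Y ∈ L, ∀ f : kernel p ⟶ Y, ∃ v : P ⟶ Y, kernel.ι p ≫ v = f)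
    (g : X ⟶ M) :
    ∀ Y ∈ L, ∀ f : kernel (pullback.snd p g) ⟶ Y,
      ∃ v : pullback p g ⟶ Y, kernel.ι (pullback.snd p g) ≫ v = f := by
  intro Y hY f
  have hι : (pullback.lift (kernel.ι p) 0 (by simp)) ≫ pullback.snd p g = 0 :=
    pullback.lift_snd _ _ _
  have ha : kernel.lift (pullback.snd p g) _ hι ≫ kernel.ι (pullback.snd p g) =
      pullback.lift (kernel.ι p) 0 (by simp) := kernel.lift_ι _ _ _
  have hbw : (kernel.ι (pullback.snd p g) ≫ pullback.fst p g) ≫ p = 0 := by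
    rw [Category.assoc, pullback.condition, ← Category.assoc, kernel.condition, zero_comp]
  have hb : kernel.lift p _ hbw ≫ kernel.ι p =
      kernel.ι (pullback.snd p g) ≫ pullback.fst p g := kernel.lift_ι _ _ _
  have hba : kernel.lift p _ hbw ≫ kernel.lift (pullback.snd p g) _ hι = 𝟙 _ := by
    rw [← cancel_mono (kernel.ι (pullback.snd p g)), Category.assoc, ha, Category.id_comp]
    apply pullback.hom_ext
    · rw [Category.assoc, pullback.lift_fst, kernel.lift_ι]
    · rw [Category.assoc, pullback.lift_snd, comp_zero, kernel.condition]
  obtain ⟨v, hv⟩ := hext Y hY (kernel.lift (pullback.snd p g) _ hι ≫ f)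
  refine ⟨pullback.fst p g ≫ v, ?_⟩
  rw [← Category.assoc, ← hb, Category.assoc, hv, ← Category.assoc, hba, Category.id_comp]

/-- An epi onto an object of `F₁` whose kernel has the extension property into `L` splits. -/
lemma splits_of_ext {F₁ L : Set C} (hb₁ : BalancedPair F₁ L) (ha₁ : Admissible F₁ L)
    {E X : C} (g : E ⟶ X) [Epi g] (hX : X ∈ F₁)
    (hext : ∀ Y ∈ L, ∀ f : kernel g ⟶ Y, ∃ v : E ⟶ Y, kernel.ι g ≫ v = f) :
    ∃ m : X ⟶ E, m ≫ g = 𝟙 X := by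
  set f := kernel.ι g
  obtain ⟨Q, hQL, hQF, hQR⟩ := hb₁.2.2.2 (kernel g)
  set η := Q.η
  have hηpre : IsPreenvelope L η := ⟨hQL 0, fun Y hY u => (hQR Y hY).1 u⟩
  have hηmono : Mono η := ha₁.2 _ _ _ hηpre
  set c := cokernel.π η
  have hw0 : c ≫ cokernel.desc η (Q.d 0) Q.η_comp_d = Q.d 0 := cokernel.π_desc _ _ _
  set w0 := cokernel.desc η (Q.d 0) Q.η_comp_d
  -- w0 is mono
  obtain ⟨Q', hQ'L, hQ'F, hQ'R⟩ := hb₁.2.2.2 (cokernel η)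
  have hρpre : IsPreenvelope L Q'.η := ⟨hQ'L 0, fun Y hY u => (hQ'R Y hY).1 u⟩
  have hρmono : Mono Q'.η := ha₁.2 _ _ _ hρpre
  obtain ⟨k₁, hk₁⟩ := (hQR _ (hQ'L 0)).2.1 (c ≫ Q'.η) (by simp [c, η, cokernel.condition_assoc])
  have hw0k₁ : w0 ≫ k₁ = Q'.η := by
    have : c ≫ w0 ≫ k₁ = c ≫ Q'.η := by rw [← Category.assoc, hw0, hk₁]
    exact (cancel_epi c).1 this
  have hw0mono : Mono w0 := by
    have : Mono (w0 ≫ k₁) := hw0k₁ ▸ hρmono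
    exact mono_of_mono w0 k₁
  -- lifting property of c for objects of F₁
  have hlift : ∀ f' : X ⟶ cokernel η, ∃ l : X ⟶ Q.obj 0, l ≫ c = f' := by
    intro f'
    have hw0d1 : w0 ≫ Q.d 1 = 0 := by
      have : c ≫ w0 ≫ Q.d 1 = c ≫ 0 := by
        rw [← Category.assoc, hw0, Q.d_comp_d 0, comp_zero]
      exact (cancel_epi c).1 this
    obtain ⟨l, hl⟩ := (hQF X hX).2.2 0 (f' ≫ w0)
      (by rw [Category.assoc, hw0d1, comp_zero])
    refine ⟨l, ?_⟩
    have : (l ≫ c) ≫ w0 = f' ≫ w0 := by rw [Category.assoc, hw0, hl]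
    exact (cancel_mono w0).1 this
  -- main chase
  obtain ⟨t, ht⟩ := hext (Q.obj 0) (hQL 0) η
  have hq0 : f ≫ t ≫ c = 0 := by rw [← Category.assoc, ht, cokernel.condition]
  set q := Abelian.epiDesc g (t ≫ c) hq0
  have hq : g ≫ q = t ≫ c := Abelian.comp_epiDesc _ _ _
  obtain ⟨q', hq'⟩ := hlift q
  have hs0 : (t - g ≫ q') ≫ c = 0 := by
    rw [Preadditive.sub_comp, Category.assoc, hq', hq, sub_self]
  set s := Abelian.monoLift η (t - g ≫ q') hs0
  have hs : s ≫ η = t - g ≫ q' := Abelian.monoLift_comp _ _ _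
  have hfs : f ≫ s = 𝟙 _ := by
    rw [← cancel_mono η, Category.assoc, hs, Preadditive.comp_sub, ht,
      ← Category.assoc, kernel.condition, zero_comp, sub_zero, Category.id_comp]
  have hker : f ≫ (𝟙 E - s ≫ f) = 0 := by
    rw [Preadditive.comp_sub, Category.comp_id, ← Category.assoc, hfs, Category.id_comp, sub_self]
  set m := Abelian.epiDesc g (𝟙 E - s ≫ f) hker
  have hm : g ≫ m = 𝟙 E - s ≫ f := Abelian.comp_epiDesc _ _ _
  refine ⟨m, ?_⟩
  rw [← cancel_epi g, ← Category.assoc, hm, Preadditive.sub_comp, Category.id_comp,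
    Category.assoc, kernel.condition, comp_zero, sub_zero, Category.comp_id]

/-- One inclusion. -/
lemma smd_subset {F₁ F₂ L : Set C}
    (hb₁ : BalancedPair F₁ L) (ha₁ : Admissible F₁ L)
    (hb₂ : BalancedPair F₂ L) (ha₂ : Admissible F₂ L) :
    Smd F₁ ⊆ Smd F₂ := by
  rintro A ⟨B, hB, i, r, hir⟩
  obtain ⟨R, hRF, hRleft, hRright⟩ := hb₂.2.2.1 A
  have hεpre : IsPrecover F₂ R.ε := ⟨hRF 0, fun X hX u => (hRleft X hX).1 u⟩
  have hεepi : Epi R.ε := ha₂.1 _ _ _ hεpre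
  haveI := hεepi
  have hext : ∀ Y ∈ L, ∀ f : kernel R.ε ⟶ Y, ∃ v : R.obj 0 ⟶ Y, kernel.ι R.ε ≫ v = f :=
    fun Y hY f => ker_ext_property hb₂.1 ha₂ R hRleft hRright hY f
  have hpbext := ker_ext_pullback R.ε hext r
  obtain ⟨m, hm⟩ := splits_of_ext hb₁ ha₁ (pullback.snd R.ε r) hB hpbext
  refine ⟨R.obj 0, hRF 0, i ≫ m ≫ pullback.fst R.ε r, R.ε, ?_⟩
  rw [Category.assoc, Category.assoc, pullback.condition, ← Category.assoc m, hm,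
    Category.id_comp, hir]

end Aux

/-- If `(F₁, L)` and `(F₂, L)` are two admissible balanced pairs in an abelian category,
then `Smd F₁ = Smd F₂`. -/
theorem smd_eq_of_admissible_balanced_pairs
    {C : Type u} [Category.{v} C] [Abelian C]
    (F₁ F₂ L : Set C)
    (hb₁ : BalancedPair F₁ L) (ha₁ : Admissible F₁ L)
    (hb₂ : BalancedPair F₂ L) (ha₂ : Admissible F₂ L) :
    Smd F₁ = Smd F₂ := by
  exact Set.Subset.antisymm (smd_subset hb₁ ha₁ hb₂ ha₂) (smd_subset hb₂ ha₂ hb₁ ha₁)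

end Paper
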